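/- Let p be a prime and n, m positive integers with n = gcd(l,m) and k = m/n. Then gcd(p^l + 1, p^m − 1) equals 1 if k is odd and p = 2; equals 2 if k is odd and p is odd; and equals p^n + 1 if k is even. -/

import Mathlib

/-- Value of `gcd(p^l + 1, p^m − 1)` according to the parity of `k = m / gcd(l,m)`. -/
theorem stmt_3 (p m l n k : ℕ) (hp : p.Prime) (hm : 0 < m) (hl : 0 < l)
    (hn : n = Nat.gcd l m) (hk : k = m / n) :
    (Odd k → p = 2 → Nat.gcd (p ^ l + 1) (p ^ m - 1) = 1) ∧
    (Odd k → Odd p → Nat.gcd (p ^ l + 1) (p ^ m - 1) = 2) ∧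
    (Even k → Nat.gcd (p ^ l + 1) (p ^ m - 1) = p ^ n + 1) := by
  have hn0 : 0 < n := by
    rw [hn]; exact Nat.gcd_pos_of_pos_left m hl
  have hnl : n ∣ l := hn ▸ Nat.gcd_dvd_left l m
  have hnm : n ∣ m := hn ▸ Nat.gcd_dvd_right l m
  set j := l / n with hjdef
  have hj : l = n * j := (Nat.mul_div_cancel' hnl).symm
  have hmk : m = n * k := by rw [hk, Nat.mul_div_cancel' hnm]
  have hcop : Nat.Coprime j k := by
    rw [hjdef, hk, hn]
    exact Nat.coprime_div_gcd_div_gcd (hn ▸ hn0)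
  set g := Nat.gcd (p ^ l + 1) (p ^ m - 1) with hgdef
  have hg1 : g ∣ p ^ l + 1 := Nat.gcd_dvd_left _ _
  have hg2 : g ∣ p ^ m - 1 := Nat.gcd_dvd_right _ _
  have h1pm : (1 : ℕ) ≤ p ^ m := Nat.one_le_pow _ _ hp.pos
  have hplm1 : (p : ZMod g) ^ l = -1 := by
    have h0 : ((p ^ l + 1 : ℕ) : ZMod g) = 0 :=
      (ZMod.natCast_eq_zero_iff _ _).mpr hg1
    push_cast at h0
    exact eq_neg_of_add_eq_zero_left h0
  have hpm1 : (p : ZMod g) ^ m = 1 := by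
    have h0 : ((p ^ m - 1 : ℕ) : ZMod g) = 0 :=
      (ZMod.natCast_eq_zero_iff _ _).mpr hg2
    rw [Nat.cast_sub h1pm] at h0
    push_cast at h0
    linear_combination h0
  have hp2l : (p : ZMod g) ^ (2 * l) = 1 := by
    rw [two_mul, pow_add, hplm1]; ring
  refine ⟨?_, ?_, ?_⟩
  · -- k odd, p = 2
    intro hok hp2
    have hgcd2 : Nat.gcd (2 * l) m = n := by
      rw [hj, hmk, ← mul_assoc, mul_comm 2 n, mul_assoc, Nat.gcd_mul_left]
      have : Nat.Coprime (2 * j) k :=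
        Nat.Coprime.mul (Nat.coprime_two_left.mpr hok) hcop
      rw [this, mul_one]
    have hpn : (p : ZMod g) ^ n = 1 := hgcd2 ▸ pow_gcd_eq_one.mpr ⟨hp2l, hpm1⟩
    have hpl1 : (p : ZMod g) ^ l = 1 := by
      rw [hj, pow_mul, hpn, one_pow]
    have h20 : ((2 : ℕ) : ZMod g) = 0 := by
      push_cast
      linear_combination hplm1 - hpl1
    have hgd2 : g ∣ 2 := (ZMod.natCast_eq_zero_iff _ _).mp h20
    have hodd : Odd (p ^ m - 1) := by
      subst hp2
      exact Nat.Even.sub_odd h1pm (Nat.even_pow.mpr ⟨even_two, hm.ne'⟩) odd_one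
    rcases (Nat.dvd_prime Nat.prime_two).mp hgd2 with h | h
    · exact h
    · exfalso
      have : (2 : ℕ) ∣ p ^ m - 1 := h ▸ hg2
      rw [Nat.odd_iff] at hodd
      omega
  · -- k odd, p odd
    intro hok hop
    have hgcd2 : Nat.gcd (2 * l) m = n := by
      rw [hj, hmk, ← mul_assoc, mul_comm 2 n, mul_assoc, Nat.gcd_mul_left]
      have : Nat.Coprime (2 * j) k :=
        Nat.Coprime.mul (Nat.coprime_two_left.mpr hok) hcop
      rw [this, mul_one]
    have hpn : (p : ZMod g) ^ n = 1 := hgcd2 ▸ pow_gcd_eq_one.mpr ⟨hp2l, hpm1⟩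
    have hpl1 : (p : ZMod g) ^ l = 1 := by
      rw [hj, pow_mul, hpn, one_pow]
    have h20 : ((2 : ℕ) : ZMod g) = 0 := by
      push_cast
      linear_combination hplm1 - hpl1
    have hgd2 : g ∣ 2 := (ZMod.natCast_eq_zero_iff _ _).mp h20
    have h2g : (2 : ℕ) ∣ g := by
      refine Nat.dvd_gcd ?_ ?_
      · exact (hop.pow).add_one.two_dvd
      · have : Odd (p ^ m) := hop.pow
        have : Even (p ^ m - 1) := Nat.Odd.sub_odd this odd_one
        exact this.two_dvd
    exact Nat.dvd_antisymm hgd2 h2g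
  · -- k even
    intro hek
    obtain ⟨s, hs⟩ := hek
    have hk2s : k = 2 * s := by omega
    have hoj : Odd j := by
      rcases Nat.even_or_odd j with he | ho
      · exfalso
        have h2j : (2 : ℕ) ∣ j := he.two_dvd
        have h2k : (2 : ℕ) ∣ k := by omega
        have := Nat.dvd_gcd h2j h2k
        rw [Nat.Coprime.gcd_eq_one hcop] at this
        omega
      · exact ho
    have hgcd2 : Nat.gcd (2 * l) m = 2 * n := by
      rw [hj, hmk, hk2s, ← mul_assoc, mul_comm 2 n, mul_assoc,
        show n * (2 * s) = n * 2 * s by ring, mul_assoc n 2 s, Nat.gcd_mul_left,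
        Nat.gcd_mul_left]
      have : Nat.Coprime j s := hcop.coprime_dvd_right ⟨2, by omega⟩
      rw [this, mul_one, mul_comm]
    have hp2n : (p : ZMod g) ^ (2 * n) = 1 := hgcd2 ▸ pow_gcd_eq_one.mpr ⟨hp2l, hpm1⟩
    obtain ⟨t, ht⟩ := hoj
    have hpn : (p : ZMod g) ^ n = -1 := by
      have : (p : ZMod g) ^ l = (p : ZMod g) ^ n := by
        rw [hj, ht, show n * (2 * t + 1) = 2 * n * t + n by ring, pow_add,
          pow_mul, hp2n, one_pow, one_mul]
      rw [← this, hplm1]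
    have hgdvd : g ∣ p ^ n + 1 := by
      apply (ZMod.natCast_eq_zero_iff _ _).mp
      push_cast
      linear_combination hpn
    have hdvd1 : p ^ n + 1 ∣ p ^ l + 1 := by
      have := Odd.nat_add_dvd_pow_add_pow (p ^ n) 1 ⟨t, ht⟩
      simpa only [one_pow, ← pow_mul, ← hj] using this
    have hdvd2 : p ^ n + 1 ∣ p ^ m - 1 := by
      have h1 : ((p : ℤ) ^ n + 1) ∣ (p : ℤ) ^ (2 * n) - 1 := by
        have : ((p : ℤ)) ^ (2 * n) - 1 = ((p : ℤ) ^ n - 1) * ((p : ℤ) ^ n + 1) := by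
          ring
        rw [this]
        exact dvd_mul_left _ _
      have h2 : ((p : ℤ) ^ (2 * n) - 1) ∣ (p : ℤ) ^ m - 1 := by
        have hm2 : m = 2 * n * s := by rw [hmk, hk2s]; ring
        have := sub_dvd_pow_sub_pow ((p : ℤ) ^ (2 * n)) 1 s
        simpa only [one_pow, ← pow_mul, ← hm2] using this
      have h3 : ((p : ℤ) ^ n + 1) ∣ (p : ℤ) ^ m - 1 := h1.trans h2
      have h4 : ((p ^ n + 1 : ℕ) : ℤ) ∣ ((p ^ m - 1 : ℕ) : ℤ) := by
        rw [Nat.cast_sub h1pm]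
        push_cast
        exact h3
      exact_mod_cast h4
    exact Nat.dvd_antisymm hgdvd (Nat.dvd_gcd hdvd1 hdvd2)
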